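/- For every ε ∈ (0,1) and every k₂ > 0 with k₂(ε+2) − ε > 0, the function f₁(k₂) = k₂²(k₂+1)ε/(k₂(ε+2) − ε) satisfies f₁(k₂) ≥ ε²(1−ε)²(1+ε−ε²)/(1+ε) = ε²/f(ε). -/

import Mathlib

open MeasureTheory ProbabilityTheory Real

/-- The uniform probability measure on the interval `[a, b]`. -/
noncomputable def uniformIcc (a b : ℝ) : Measure ℝ :=
  (ENNReal.ofReal (b - a))⁻¹ • (MeasureTheory.volume.restrict (Set.Icc a b))

/-- The median of `2*n+1` real values: their `(n+1)`-st smallest value. -/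
noncomputable def medianOf {n : ℕ} (v : Fin (2 * n + 1) → ℝ) : ℝ :=
  (Multiset.sort (↑(List.ofFn v)) (· ≤ ·)).get ⟨n, by simp <;> omega⟩

/-- The nuisance factor `f(ε) = (1+ε)/((1-ε)² (1+ε-ε²))`. -/
noncomputable def nuisance (ε : ℝ) : ℝ := (1 + ε) / ((1 - ε) ^ 2 * (1 + ε - ε ^ 2))

/-- For every `ε ∈ (0,1)` and every `k₂ > 0` with `k₂(ε+2) − ε > 0`,
the function `f₁(k₂) = k₂²(k₂+1)ε/(k₂(ε+2) − ε)` satisfies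
`f₁(k₂) ≥ ε²(1−ε)²(1+ε−ε²)/(1+ε) = ε²/f(ε)`. -/
theorem f1_lower_bound (ε : ℝ) (hε : ε ∈ Set.Ioo (0 : ℝ) 1) (k₂ : ℝ) (hk : 0 < k₂)
    (hden : 0 < k₂ * (ε + 2) - ε) :
    ε ^ 2 * (1 - ε) ^ 2 * (1 + ε - ε ^ 2) / (1 + ε) ≤
        k₂ ^ 2 * (k₂ + 1) * ε / (k₂ * (ε + 2) - ε) ∧
      ε ^ 2 * (1 - ε) ^ 2 * (1 + ε - ε ^ 2) / (1 + ε) = ε ^ 2 / nuisance ε := by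
  obtain ⟨h0, h1⟩ := hε
  constructor
  · rw [div_le_div_iff₀ (by nlinarith) hden]
    have hB : 0 ≤ (1 - ε) ^ 2 * (1 + ε - ε ^ 2) := by
      nlinarith [sq_nonneg (1 - ε), mul_nonneg h0.le (sub_nonneg.2 h1.le),
        mul_nonneg (sq_nonneg (1 - ε)) (mul_nonneg h0.le (sub_nonneg.2 h1.le))]
    have h2 : 4 * ε * (k₂ * (ε + 2) - ε) ≤ k₂ ^ 2 * (ε + 2) ^ 2 := by
      nlinarith [sq_nonneg (k₂ * (ε + 2) - 2 * ε)]
    have haux : (1 - ε) ^ 2 * (1 + ε - ε ^ 2) * (ε + 2) ^ 2 ≤ 4 * (1 + ε) := by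
      nlinarith [sq_nonneg ε, sq_nonneg (1 - ε), mul_nonneg (mul_nonneg h0.le h0.le) h0.le,
        mul_nonneg (mul_nonneg h0.le h0.le) (sub_nonneg.2 h1.le),
        mul_nonneg (mul_nonneg (mul_nonneg h0.le h0.le) h0.le) h0.le,
        mul_nonneg (sq_nonneg ε) (sq_nonneg (1 - ε)),
        mul_nonneg (mul_nonneg (sq_nonneg ε) (sq_nonneg (1 - ε))) h0.le]
    nlinarith [mul_le_mul_of_nonneg_left h2 (mul_nonneg h0.le hB),
      mul_le_mul_of_nonneg_left haux (mul_nonneg h0.le (sq_nonneg k₂)),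
      mul_nonneg (mul_nonneg h0.le (mul_nonneg hk.le (sq_nonneg k₂))) (by nlinarith : (0:ℝ) ≤ 1 + ε)]
  · rw [nuisance, div_div_eq_mul_div, eq_div_iff (by nlinarith)]
    field_simp
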